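/- (Theorem 2 of the paper: non-stationary ELBO.) Let (Z_c, μ_c), (Z_w, μ_w), (Z_v, μ_v) be measurable spaces each equipped with a σ-finite measure, and let T ∈ ℕ. Let p_c be a probability density on Z_c; for each t ∈ {1,…,T} let p^w_t : Z_w^{t−1} × Z_w → [0,∞) and p^v_t : Z_v^{t−1} × Z_v → [0,∞) be measurable conditional densities normalized in their last argument; let f_t : Z_c × Z_w → [0,∞) and g_t : Z_c × Z_v → [0,∞) be measurable; let q_c be a probability density on Z_c and q^w_t, q^v_t measurable conditional densities normalized in their last argument. On Z_c × Z_w^T × Z_v^T define Q(z_c, w_{1:T}, v_{1:T}) = q_c(z_c)·∏_{t=1}^T q^w_t(w_{<t}, w_t)·q^v_t(v_{<t}, v_t) and G(z_c, w_{1:T}, v_{1:T}) = p_c(z_c)·∏_{t=1}^T p^w_t(w_{<t}, w_t)·p^v_t(v_{<t}, v_t)·f_t(z_c, w_t)·g_t(z_c, v_t), and suppose the marginal likelihood m = ∫ G d(μ_c × μ_w^{⊗T} × μ_v^{⊗T}) satisfies 0 < m < ∞. Assume G > 0 almost everywhere with respect to Q·(μ_c × μ_w^{⊗T} × μ_v^{⊗T}),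 that Q·log(Q/G) is integrable, that for each t the functions Q·log f_t(z_c, w_t) and Q·log g_t(z_c, v_t) are integrable, that q_c·log(q_c/p_c) is integrable, and that for each t the functions (w_{1:t}) ↦ (∏_{s=1}^t q^w_s(w_{<s}, w_s))·log(q^w_t(w_{<t}, w_t)/p^w_t(w_{<t}, w_t)) and the analogous v-functions are integrable. Then log m ≥ Σ_{t=1}^T ∫ Q·( log f_t(z_c, w_t) + log g_t(z_c, v_t) ) − KL(q_c‖p_c) − Σ_{t=1}^T ∫_{Z_w^t} (∏_{s=1}^t q^w_s(w_{<s}, w_s))·log( q^w_t(w_{<t}, w_t)/p^w_t(w_{<t}, w_t) ) dμ_w^{⊗t} − Σ_{t=1}^T ∫_{Z_v^t} (∏_{s=1}^t q^v_s(v_{<s}, v_s))·log( q^v_t(v_{<t}, v_t)/p^v_t(v_{<t}, v_t) ) dμ_v^{⊗t}; that is, the log-likelihood of the observed sequences is bounded below by the LSSAE objective, which is the evidence lower bound of the non-stationary model. -/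

import Mathlib

open MeasureTheory

/-- The autoregressive product `∏_{s=1}^n k_s((z_1,…,z_{s-1}), z_s)` of the first `n ≤ T`
conditional densities of an autoregressive family `k`, evaluated on a history
`z : Fin n → Z` (0-indexed: `k t` has history length `t`). -/
noncomputable def arProdLE {Z : Type*} {T : ℕ}
    (k : (t : Fin T) → (Fin (t : ℕ) → Z) → Z → ℝ)
    {n : ℕ} (hn : n ≤ T) (z : Fin n → Z) : ℝ :=
  ∏ s : Fin n, k ⟨s, lt_of_lt_of_le s.isLt hn⟩ (fun r => z (Fin.castLE s.isLt.le r)) (z s)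

/-- The variational posterior density
`Q(z_c, w_{1:T}, v_{1:T}) = q_c(z_c) · ∏_t q^w_t(w_{<t}, w_t) · ∏_t q^v_t(v_{<t}, v_t)`
of the non-stationary sequential model. -/
noncomputable def seqQ {Zc Zw Zv : Type*} {T : ℕ}
    (qc : Zc → ℝ)
    (qw : (t : Fin T) → (Fin (t : ℕ) → Zw) → Zw → ℝ)
    (qv : (t : Fin T) → (Fin (t : ℕ) → Zv) → Zv → ℝ)
    (z : Zc × (Fin T → Zw) × (Fin T → Zv)) : ℝ :=
  qc z.1 * arProdLE qw (le_refl T) z.2.1 * arProdLE qv (le_refl T) z.2.2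

/-- The joint generative density (for fixed observed sequences)
`G(z_c, w_{1:T}, v_{1:T}) = p_c(z_c) · ∏_t p^w_t(w_{<t}, w_t) · p^v_t(v_{<t}, v_t)
· f_t(z_c, w_t) · g_t(z_c, v_t)` of the non-stationary sequential model. -/
noncomputable def seqG {Zc Zw Zv : Type*} {T : ℕ}
    (pc : Zc → ℝ)
    (pw : (t : Fin T) → (Fin (t : ℕ) → Zw) → Zw → ℝ)
    (pv : (t : Fin T) → (Fin (t : ℕ) → Zv) → Zv → ℝ)
    (f : Fin T → Zc → Zw → ℝ) (g : Fin T → Zc → Zv → ℝ)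
    (z : Zc × (Fin T → Zw) × (Fin T → Zv)) : ℝ :=
  pc z.1 * arProdLE pw (le_refl T) z.2.1 * arProdLE pv (le_refl T) z.2.2
    * (∏ t, f t z.1 (z.2.1 t)) * (∏ t, g t z.1 (z.2.2 t))

lemma my_integrable_of_integral_eq_one {α : Type*} [MeasurableSpace α] {μ : Measure α} {f : α → ℝ}
    (h : ∫ z, f z ∂μ = 1) : Integrable f μ := by
  by_contra hc
  rw [integral_undef hc] at h; norm_num at h

lemma arProdLE_nonneg {Z : Type*} {T : ℕ}
    {k : (t : Fin T) → (Fin (t : ℕ) → Z) → Z → ℝ}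
    (hk : ∀ t h z, 0 ≤ k t h z) {n : ℕ} (hn : n ≤ T) (z : Fin n → Z) :
    0 ≤ arProdLE k hn z :=
  Finset.prod_nonneg fun _ _ => hk _ _ _

lemma arProdLE_measurable {Z : Type*} [MeasurableSpace Z] {T : ℕ}
    {k : (t : Fin T) → (Fin (t : ℕ) → Z) → Z → ℝ}
    (hk : ∀ t, Measurable (Function.uncurry (k t))) {n : ℕ} (hn : n ≤ T) :
    Measurable (fun z : Fin n → Z => arProdLE k hn z) := by
  unfold arProdLE
  refine Finset.measurable_prod _ fun s _ => ?_
  have m1 : Measurable (fun z : Fin n → Z =>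
      ((fun r : Fin (s : ℕ) => z (Fin.castLE s.isLt.le r)), z s)) :=
    (measurable_pi_lambda _ fun r => measurable_pi_apply _).prodMk (measurable_pi_apply _)
  exact (hk ⟨s, lt_of_lt_of_le s.isLt hn⟩).comp m1

lemma snoc_castLE {Z : Type*} {n m : ℕ} (z : Fin n → Z) (a : Z) (h : m ≤ n) (hm : m ≤ n + 1)
    (r : Fin m) :
    (Fin.snoc z a : Fin (n + 1) → Z) (Fin.castLE hm r) = z (Fin.castLE h r) := by
  have : Fin.castLE hm r = Fin.castSucc (Fin.castLE h r) := rfl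
  rw [this, Fin.snoc_castSucc]

lemma arProdLE_snoc {Z : Type*} {T : ℕ}
    (k : (t : Fin T) → (Fin (t : ℕ) → Z) → Z → ℝ)
    {n : ℕ} (hn : n + 1 ≤ T) (z : Fin n → Z) (a : Z) :
    arProdLE k hn (Fin.snoc z a)
      = arProdLE k (Nat.le_of_succ_le hn) z * k ⟨n, hn⟩ z a := by
  unfold arProdLE
  rw [Fin.prod_univ_castSucc]
  congr 1
  · refine Finset.prod_congr rfl fun s _ => ?_
    have hist : (fun r : Fin ((Fin.castSucc s : Fin (n + 1)) : ℕ) =>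
        (Fin.snoc z a : Fin (n + 1) → Z) (Fin.castLE (Fin.castSucc s).isLt.le r))
        = (fun r => z (Fin.castLE s.isLt.le r)) := by
      funext r
      exact snoc_castLE z a _ _ r
    rw [hist, Fin.snoc_castSucc]
    rfl
  · have hist : (fun r : Fin ((Fin.last n : Fin (n + 1)) : ℕ) =>
        (Fin.snoc z a : Fin (n + 1) → Z) (Fin.castLE (Fin.last n).isLt.le r))
        = (fun r => z (Fin.castLE (le_refl n) r)) := by
      funext r
      exact snoc_castLE z a _ _ r
    rw [hist, Fin.snoc_last]
    rfl

lemma cond_mul_fubini {Z W : Type*} [MeasurableSpace Z] [MeasurableSpace W]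
    (μ : Measure Z) [SigmaFinite μ] (π : Measure W) [SigmaFinite π]
    (κ : W → Z → ℝ) (hκm : Measurable (Function.uncurry κ))
    (hκ0 : ∀ w z, 0 ≤ κ w z) (hκ1 : ∀ w, ∫ z, κ w z ∂μ = 1)
    (C : W → ℝ) (hCm : Measurable C) (hCi : Integrable C π) :
    Integrable (fun p : Z × W => κ p.2 p.1 * C p.2) (μ.prod π) ∧
      ∫ p : Z × W, κ p.2 p.1 * C p.2 ∂(μ.prod π) = ∫ w, C w ∂π := by
  have hκslice : ∀ w, Integrable (fun z => κ w z) μ := fun w =>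
    my_integrable_of_integral_eq_one (hκ1 w)
  have hmf : Measurable (fun p : Z × W => κ p.2 p.1 * C p.2) := by
    have m0 : Measurable (fun p : Z × W => ((p.2, p.1) : W × Z)) :=
      measurable_snd.prodMk measurable_fst
    exact (hκm.comp m0).mul (hCm.comp measurable_snd)
  have hint : Integrable (fun p : Z × W => κ p.2 p.1 * C p.2) (μ.prod π) := by
    rw [integrable_prod_iff' hmf.aestronglyMeasurable]
    constructor
    · refine Filter.Eventually.of_forall fun w => ?_
      simpa using (hκslice w).mul_const (C w)
    · have : (fun w => ∫ z, ‖κ w z * C w‖ ∂μ) = fun w => |C w| := by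
        funext w
        have : (fun z => ‖κ w z * C w‖) = fun z => κ w z * |C w| := by
          funext z
          rw [Real.norm_eq_abs, abs_mul, abs_of_nonneg (hκ0 w z)]
        rw [this, integral_mul_const, hκ1 w, one_mul]
      rw [this]
      exact hCi.abs
  refine ⟨hint, ?_⟩
  rw [integral_prod_symm _ hint]
  have : (fun w => ∫ z, κ w z * C w ∂μ) = fun w => C w := by
    funext w
    rw [integral_mul_const, hκ1 w, one_mul]
  rw [this]

lemma arProdLE_marginal {Z : Type*} [MeasurableSpace Z] (μ : Measure Z) [SigmaFinite μ] {T : ℕ}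
    (k : (t : Fin T) → (Fin (t : ℕ) → Z) → Z → ℝ)
    (hkm : ∀ t, Measurable (Function.uncurry (k t)))
    (hk0 : ∀ t h z, 0 ≤ k t h z) (hk1 : ∀ t h, ∫ z, k t h z ∂μ = 1)
    {n : ℕ} (hn : n ≤ T) (F : (Fin n → Z) → ℝ) (hFm : Measurable F)
    (hFi : Integrable (fun z => arProdLE k hn z * F z) (Measure.pi fun _ : Fin n => μ)) :
    Integrable (fun z : Fin T → Z => arProdLE k (le_refl T) z * F (fun r => z (Fin.castLE hn r)))
        (Measure.pi fun _ : Fin T => μ) ∧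
      ∫ z : Fin T → Z, arProdLE k (le_refl T) z * F (fun r => z (Fin.castLE hn r))
          ∂(Measure.pi fun _ : Fin T => μ)
        = ∫ z : Fin n → Z, arProdLE k hn z * F z ∂(Measure.pi fun _ : Fin n => μ) := by
  suffices H : ∀ m (hnm : n ≤ m) (hm : m ≤ T),
      Integrable (fun z : Fin m → Z => arProdLE k hm z * F (fun r => z (Fin.castLE hnm r)))
          (Measure.pi fun _ : Fin m => μ) ∧
        ∫ z : Fin m → Z, arProdLE k hm z * F (fun r => z (Fin.castLE hnm r))
            ∂(Measure.pi fun _ : Fin m => μ)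
          = ∫ z : Fin n → Z, arProdLE k hn z * F z ∂(Measure.pi fun _ : Fin n => μ) by
    exact H T hn (le_refl T)
  intro m hnm
  induction m, hnm using Nat.le_induction with
  | base =>
    intro hm
    exact ⟨hFi, rfl⟩
  | succ m hnm IH =>
    intro hm1
    have hm : m ≤ T := Nat.le_of_succ_le hm1
    obtain ⟨IHint, IHeq⟩ := IH hm
    -- the measure-preserving equivalence peeling off the last coordinate
    set e := MeasurableEquiv.piFinSuccAbove (fun _ : Fin (m + 1) => Z) (Fin.last m) with he
    have hMP : MeasurePreserving e (Measure.pi fun _ : Fin (m + 1) => μ)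
        (μ.prod (Measure.pi fun _ : Fin m => μ)) :=
      measurePreserving_piFinSuccAbove (fun _ : Fin (m + 1) => μ) (Fin.last m)
    set C : (Fin m → Z) → ℝ :=
      fun z => arProdLE k hm z * F (fun r => z (Fin.castLE hnm r)) with hC
    have hCm : Measurable C := by
      refine (arProdLE_measurable hkm hm).mul (hFm.comp ?_)
      exact measurable_pi_lambda _ fun r => measurable_pi_apply _
    set Φ : Z × (Fin m → Z) → ℝ := fun p => k ⟨m, hm1⟩ p.2 p.1 * C p.2 with hΦ
    obtain ⟨hΦint, hΦeq⟩ := cond_mul_fubini μ (Measure.pi fun _ : Fin m => μ)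
      (k ⟨m, hm1⟩) (hkm _) (fun w a => hk0 _ _ _) (fun w => hk1 _ _) C hCm IHint
    have hsymm : ∀ p : Z × (Fin m → Z), e.symm p = Fin.snoc p.2 p.1 := by
      intro p
      simp [he, MeasurableEquiv.piFinSuccAbove_symm_apply, Fin.snocEquiv]
    have hkey : ∀ p : Z × (Fin m → Z),
        arProdLE k hm1 (e.symm p)
            * F (fun r => (e.symm p) (Fin.castLE (Nat.le_succ_of_le hnm) r)) = Φ p := by
      intro p
      rw [hsymm p, arProdLE_snoc k hm1 p.2 p.1]
      have harg : (fun r => (Fin.snoc p.2 p.1 : Fin (m + 1) → Z)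
            (Fin.castLE (Nat.le_succ_of_le hnm) r))
          = fun r => p.2 (Fin.castLE hnm r) := by
        funext r; exact snoc_castLE p.2 p.1 hnm _ r
      rw [harg]
      simp only [hΦ, hC]
      ring
    have hfun : (fun z : Fin (m + 1) → Z => arProdLE k hm1 z
          * F (fun r => z (Fin.castLE (Nat.le_succ_of_le hnm) r)))
        = fun z => Φ (e z) := by
      funext z
      rw [← hkey (e z), e.symm_apply_apply]
    constructor
    · rw [hfun]
      exact (hMP.integrable_comp_emb e.measurableEmbedding).mpr hΦint
    · rw [hfun]
      rw [show (∫ z : Fin (m + 1) → Z, Φ (e z) ∂(Measure.pi fun _ : Fin (m + 1) => μ))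
            = ∫ p, Φ p ∂(μ.prod (Measure.pi fun _ : Fin m => μ)) from
          hMP.integral_comp e.measurableEmbedding Φ]
      rw [show (∫ p, Φ p ∂(μ.prod (Measure.pi fun _ : Fin m => μ)))
            = ∫ w, C w ∂(Measure.pi fun _ : Fin m => μ) from hΦeq]
      exact IHeq

lemma arProdLE_norm {Z : Type*} [MeasurableSpace Z] (μ : Measure Z) [SigmaFinite μ] {T : ℕ}
    (k : (t : Fin T) → (Fin (t : ℕ) → Z) → Z → ℝ)
    (hkm : ∀ t, Measurable (Function.uncurry (k t)))
    (hk0 : ∀ t h z, 0 ≤ k t h z) (hk1 : ∀ t h, ∫ z, k t h z ∂μ = 1) :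
    Integrable (fun z : Fin T → Z => arProdLE k (le_refl T) z) (Measure.pi fun _ : Fin T => μ) ∧
      ∫ z : Fin T → Z, arProdLE k (le_refl T) z ∂(Measure.pi fun _ : Fin T => μ) = 1 := by
  have hpi0 : IsProbabilityMeasure (Measure.pi fun _ : Fin 0 => μ) := by
    rw [Measure.pi_of_empty]; infer_instance
  have hone : (fun z : Fin 0 → Z => arProdLE k (Nat.zero_le T) z * (1 : ℝ)) = fun _ => 1 := by
    funext z; simp [arProdLE]
  have hbase : Integrable (fun z : Fin 0 → Z => arProdLE k (Nat.zero_le T) z * (1 : ℝ))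
      (Measure.pi fun _ : Fin 0 => μ) := by
    rw [hone]; exact integrable_const 1
  obtain ⟨h1, h2⟩ := arProdLE_marginal μ k hkm hk0 hk1 (Nat.zero_le T)
    (fun _ => (1 : ℝ)) measurable_const hbase
  constructor
  · simpa using h1
  · have hrhs : ∫ z : Fin 0 → Z, arProdLE k (Nat.zero_le T) z * (1 : ℝ)
        ∂(Measure.pi fun _ : Fin 0 => μ) = 1 := by
      rw [hone, integral_const]; simp
    rw [← hrhs, ← h2]
    simp

lemma prod3_fubini {A B C : Type*} [MeasurableSpace A] [MeasurableSpace B] [MeasurableSpace C]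
    {μ : Measure A} {ν : Measure B} {ρ : Measure C}
    [SigmaFinite μ] [SigmaFinite ν] [SigmaFinite ρ]
    {F : A → ℝ} {Gw : B → ℝ} {Gv : C → ℝ}
    (hF : Integrable F μ) (hGw : Integrable Gw ν) (hGv : Integrable Gv ρ) :
    Integrable (fun z : A × B × C => F z.1 * Gw z.2.1 * Gv z.2.2) (μ.prod (ν.prod ρ)) ∧
      ∫ z : A × B × C, F z.1 * Gw z.2.1 * Gv z.2.2 ∂(μ.prod (ν.prod ρ))
        = (∫ x, F x ∂μ) * (∫ y, Gw y ∂ν) * (∫ w, Gv w ∂ρ) := by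
  have h1 : Integrable (fun p : B × C => Gw p.1 * Gv p.2) (ν.prod ρ) := hGw.mul_prod hGv
  have h2 : Integrable (fun z : A × B × C => F z.1 * (Gw z.2.1 * Gv z.2.2)) (μ.prod (ν.prod ρ)) :=
    hF.mul_prod h1
  have hfe : (fun z : A × B × C => F z.1 * Gw z.2.1 * Gv z.2.2)
      = fun z : A × B × C => F z.1 * (Gw z.2.1 * Gv z.2.2) := by
    funext z; ring
  constructor
  · rw [hfe]; exact h2
  · rw [hfe]
    have h3 := integral_prod_mul (μ := μ) (ν := ν.prod ρ) F (fun p : B × C => Gw p.1 * Gv p.2)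
    rw [h3, integral_prod_mul, mul_assoc]

noncomputable def logRatioLast {Z : Type*} {T : ℕ}
    (q p : (t : Fin T) → (Fin (t : ℕ) → Z) → Z → ℝ) (t : Fin T)
    (y : Fin ((t : ℕ) + 1) → Z) : ℝ :=
  Real.log (q t (fun r => y r.castSucc) (y (Fin.last _)) /
            p t (fun r => y r.castSucc) (y (Fin.last _)))

lemma logRatioLast_measurable {Z : Type*} [MeasurableSpace Z] {T : ℕ}
    (q p : (t : Fin T) → (Fin (t : ℕ) → Z) → Z → ℝ) (t : Fin T)
    (hq : Measurable (Function.uncurry (q t))) (hp : Measurable (Function.uncurry (p t))) :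
    Measurable (logRatioLast q p t) := by
  have m1 : Measurable (fun y : Fin ((t : ℕ) + 1) → Z =>
      ((fun r : Fin (t : ℕ) => y r.castSucc), y (Fin.last _))) :=
    (measurable_pi_lambda _ fun r => measurable_pi_apply _).prodMk (measurable_pi_apply _)
  exact Real.measurable_log.comp ((hq.comp m1).div (hp.comp m1))

/-- **Theorem 2 of the paper: non-stationary ELBO.**
With static latent `z_c` (prior `p_c`, posterior `q_c`), two Markov chains of dynamic
latents with conditional priors `p^w_t, p^v_t` and conditional posteriors `q^w_t, q^v_t`,
per-time-step likelihood factors `f_t, g_t` of the fixed observed sequences, and marginal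
likelihood `m = ∫ G` with `0 < m < ∞` (finiteness expressed by integrability of `G`),
the log-likelihood `log m` of the observed sequences is bounded below by the LSSAE
objective: the reconstruction terms minus `KL(q_c‖p_c)` minus the summed expected
conditional KL divergences of the two chains. -/
theorem nonstationary_elbo
    {Zc Zw Zv : Type*} [MeasurableSpace Zc] [MeasurableSpace Zw] [MeasurableSpace Zv]
    (μc : Measure Zc) (μw : Measure Zw) (μv : Measure Zv)
    [SigmaFinite μc] [SigmaFinite μw] [SigmaFinite μv] (T : ℕ)
    (pc qc : Zc → ℝ)
    (pw qw : (t : Fin T) → (Fin (t : ℕ) → Zw) → Zw → ℝ)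
    (pv qv : (t : Fin T) → (Fin (t : ℕ) → Zv) → Zv → ℝ)
    (f : Fin T → Zc → Zw → ℝ) (g : Fin T → Zc → Zv → ℝ)
    (hpc_meas : Measurable pc) (hpc_nonneg : ∀ z, 0 ≤ pc z) (hpc_norm : ∫ z, pc z ∂μc = 1)
    (hqc_meas : Measurable qc) (hqc_nonneg : ∀ z, 0 ≤ qc z) (hqc_norm : ∫ z, qc z ∂μc = 1)
    (hpw_meas : ∀ t, Measurable (Function.uncurry (pw t)))
    (hpw_nonneg : ∀ t h z, 0 ≤ pw t h z) (hpw_norm : ∀ t h, ∫ z, pw t h z ∂μw = 1)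
    (hqw_meas : ∀ t, Measurable (Function.uncurry (qw t)))
    (hqw_nonneg : ∀ t h z, 0 ≤ qw t h z) (hqw_norm : ∀ t h, ∫ z, qw t h z ∂μw = 1)
    (hpv_meas : ∀ t, Measurable (Function.uncurry (pv t)))
    (hpv_nonneg : ∀ t h z, 0 ≤ pv t h z) (hpv_norm : ∀ t h, ∫ z, pv t h z ∂μv = 1)
    (hqv_meas : ∀ t, Measurable (Function.uncurry (qv t)))
    (hqv_nonneg : ∀ t h z, 0 ≤ qv t h z) (hqv_norm : ∀ t h, ∫ z, qv t h z ∂μv = 1)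
    (hf_meas : ∀ t, Measurable (Function.uncurry (f t))) (hf_nonneg : ∀ t zc zw, 0 ≤ f t zc zw)
    (hg_meas : ∀ t, Measurable (Function.uncurry (g t))) (hg_nonneg : ∀ t zc zv, 0 ≤ g t zc zv)
    (ν : Measure (Zc × (Fin T → Zw) × (Fin T → Zv)))
    (hν : ν = μc.prod ((Measure.pi fun _ => μw).prod (Measure.pi fun _ => μv)))
    (hG_int : Integrable (seqG pc pw pv f g) ν)
    (m : ℝ) (hm : m = ∫ z, seqG pc pw pv f g z ∂ν) (hm_pos : 0 < m)
    (h_pos : ∀ᵐ z ∂ν, 0 < seqQ qc qw qv z → 0 < seqG pc pw pv f g z)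
    (hQG_int : Integrable
        (fun z => seqQ qc qw qv z *
          Real.log (seqQ qc qw qv z / seqG pc pw pv f g z)) ν)
    (hf_int : ∀ t, Integrable
        (fun z => seqQ qc qw qv z * Real.log (f t z.1 (z.2.1 t))) ν)
    (hg_int : ∀ t, Integrable
        (fun z => seqQ qc qw qv z * Real.log (g t z.1 (z.2.2 t))) ν)
    (hklc_int : Integrable (fun z => qc z * Real.log (qc z / pc z)) μc)
    (hklw_int : ∀ t : Fin T, Integrable
        (fun z : Fin ((t : ℕ) + 1) → Zw =>
          arProdLE qw t.isLt z *
            Real.log (qw t (fun r => z r.castSucc) (z (Fin.last _)) /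
                      pw t (fun r => z r.castSucc) (z (Fin.last _))))
        (Measure.pi fun _ => μw))
    (hklv_int : ∀ t : Fin T, Integrable
        (fun z : Fin ((t : ℕ) + 1) → Zv =>
          arProdLE qv t.isLt z *
            Real.log (qv t (fun r => z r.castSucc) (z (Fin.last _)) /
                      pv t (fun r => z r.castSucc) (z (Fin.last _))))
        (Measure.pi fun _ => μv)) :
    Real.log m
      ≥ (∑ t : Fin T, ∫ z, seqQ qc qw qv z *
            (Real.log (f t z.1 (z.2.1 t)) + Real.log (g t z.1 (z.2.2 t))) ∂ν)
        - (∫ z, qc z * Real.log (qc z / pc z) ∂μc)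
        - (∑ t : Fin T, ∫ z : Fin ((t : ℕ) + 1) → Zw,
            arProdLE qw t.isLt z *
              Real.log (qw t (fun r => z r.castSucc) (z (Fin.last _)) /
                        pw t (fun r => z r.castSucc) (z (Fin.last _)))
            ∂(Measure.pi fun _ => μw))
        - (∑ t : Fin T, ∫ z : Fin ((t : ℕ) + 1) → Zv,
            arProdLE qv t.isLt z *
              Real.log (qv t (fun r => z r.castSucc) (z (Fin.last _)) /
                        pv t (fun r => z r.castSucc) (z (Fin.last _)))
            ∂(Measure.pi fun _ => μv)) := by
  subst hν
  set ν : Measure (Zc × (Fin T → Zw) × (Fin T → Zv)) :=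
    μc.prod ((Measure.pi fun _ => μw).prod (Measure.pi fun _ => μv)) with hν'
  have hQ0 : ∀ z, 0 ≤ seqQ qc qw qv z := fun z =>
    mul_nonneg (mul_nonneg (hqc_nonneg _) (arProdLE_nonneg hqw_nonneg _ _))
      (arProdLE_nonneg hqv_nonneg _ _)
  have hG0 : ∀ z, 0 ≤ seqG pc pw pv f g z := fun z =>
    mul_nonneg (mul_nonneg (mul_nonneg (mul_nonneg (hpc_nonneg _)
      (arProdLE_nonneg hpw_nonneg _ _)) (arProdLE_nonneg hpv_nonneg _ _))
      (Finset.prod_nonneg fun t _ => hf_nonneg _ _ _))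
      (Finset.prod_nonneg fun t _ => hg_nonneg _ _ _)
  have hqc_int : Integrable qc μc := my_integrable_of_integral_eq_one hqc_norm
  obtain ⟨hQw_int, hQw_norm⟩ := arProdLE_norm μw qw hqw_meas hqw_nonneg hqw_norm
  obtain ⟨hQv_int, hQv_norm⟩ := arProdLE_norm μv qv hqv_meas hqv_nonneg hqv_norm
  obtain ⟨hQ_int0, hQ_eq0⟩ := prod3_fubini hqc_int hQw_int hQv_int
  have hQ_int : Integrable (seqQ qc qw qv) ν := hQ_int0
  have hQ_one : ∫ z, seqQ qc qw qv z ∂ν = 1 := by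
    rw [show (fun z : Zc × (Fin T → Zw) × (Fin T → Zv) => seqQ qc qw qv z)
        = fun z : Zc × (Fin T → Zw) × (Fin T → Zv) =>
          qc z.1 * arProdLE qw (le_refl T) z.2.1 * arProdLE qv (le_refl T) z.2.2 from rfl,
      hQ_eq0, hqc_norm, hQw_norm, hQv_norm]
    norm_num
  -- marginalized chain KL integrands
  have hmargw : ∀ t : Fin T,
      Integrable (fun z : Fin T → Zw => arProdLE qw (le_refl T) z *
          logRatioLast qw pw t (fun r => z (Fin.castLE t.isLt r))) (Measure.pi fun _ => μw) ∧
        ∫ z : Fin T → Zw, arProdLE qw (le_refl T) z *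
            logRatioLast qw pw t (fun r => z (Fin.castLE t.isLt r)) ∂(Measure.pi fun _ => μw)
          = ∫ y : Fin ((t : ℕ) + 1) → Zw, arProdLE qw t.isLt y * logRatioLast qw pw t y
              ∂(Measure.pi fun _ => μw) := fun t =>
    arProdLE_marginal μw qw hqw_meas hqw_nonneg hqw_norm t.isLt (logRatioLast qw pw t)
      (logRatioLast_measurable qw pw t (hqw_meas t) (hpw_meas t)) (hklw_int t)
  have hmargv : ∀ t : Fin T,
      Integrable (fun z : Fin T → Zv => arProdLE qv (le_refl T) z *
          logRatioLast qv pv t (fun r => z (Fin.castLE t.isLt r))) (Measure.pi fun _ => μv) ∧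
        ∫ z : Fin T → Zv, arProdLE qv (le_refl T) z *
            logRatioLast qv pv t (fun r => z (Fin.castLE t.isLt r)) ∂(Measure.pi fun _ => μv)
          = ∫ y : Fin ((t : ℕ) + 1) → Zv, arProdLE qv t.isLt y * logRatioLast qv pv t y
              ∂(Measure.pi fun _ => μv) := fun t =>
    arProdLE_marginal μv qv hqv_meas hqv_nonneg hqv_norm t.isLt (logRatioLast qv pv t)
      (logRatioLast_measurable qv pv t (hqv_meas t) (hpv_meas t)) (hklv_int t)
  -- lifted to the full space
  have hτc : Integrable (fun z : Zc × (Fin T → Zw) × (Fin T → Zv) =>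
        seqQ qc qw qv z * Real.log (qc z.1 / pc z.1)) ν ∧
      ∫ z, seqQ qc qw qv z * Real.log (qc z.1 / pc z.1) ∂ν
        = ∫ x, qc x * Real.log (qc x / pc x) ∂μc := by
    obtain ⟨h1, h2⟩ := prod3_fubini hklc_int hQw_int hQv_int
    have hpt : ∀ z : Zc × (Fin T → Zw) × (Fin T → Zv),
        qc z.1 * Real.log (qc z.1 / pc z.1) * arProdLE qw (le_refl T) z.2.1
            * arProdLE qv (le_refl T) z.2.2
          = seqQ qc qw qv z * Real.log (qc z.1 / pc z.1) := by
      intro z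
      show _ = qc z.1 * arProdLE qw (le_refl T) z.2.1 * arProdLE qv (le_refl T) z.2.2 * _
      ring
    constructor
    · exact h1.congr (Filter.Eventually.of_forall hpt)
    · rw [← integral_congr_ae (Filter.Eventually.of_forall hpt), h2, hQw_norm, hQv_norm]
      ring
  have hτw : ∀ t : Fin T,
      Integrable (fun z : Zc × (Fin T → Zw) × (Fin T → Zv) => seqQ qc qw qv z *
          logRatioLast qw pw t (fun r => z.2.1 (Fin.castLE t.isLt r))) ν ∧
        ∫ z, seqQ qc qw qv z * logRatioLast qw pw t (fun r => z.2.1 (Fin.castLE t.isLt r)) ∂ν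
          = ∫ y : Fin ((t : ℕ) + 1) → Zw, arProdLE qw t.isLt y * logRatioLast qw pw t y
              ∂(Measure.pi fun _ => μw) := by
    intro t
    obtain ⟨h1, h2⟩ := prod3_fubini hqc_int (hmargw t).1 hQv_int
    have hpt : ∀ z : Zc × (Fin T → Zw) × (Fin T → Zv),
        qc z.1 * (arProdLE qw (le_refl T) z.2.1 *
              logRatioLast qw pw t (fun r => z.2.1 (Fin.castLE t.isLt r)))
            * arProdLE qv (le_refl T) z.2.2
          = seqQ qc qw qv z * logRatioLast qw pw t (fun r => z.2.1 (Fin.castLE t.isLt r)) := by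
      intro z
      show _ = qc z.1 * arProdLE qw (le_refl T) z.2.1 * arProdLE qv (le_refl T) z.2.2 * _
      ring
    constructor
    · exact h1.congr (Filter.Eventually.of_forall hpt)
    · rw [← integral_congr_ae (Filter.Eventually.of_forall hpt), h2, hqc_norm, hQv_norm,
        (hmargw t).2]
      ring
  have hτv : ∀ t : Fin T,
      Integrable (fun z : Zc × (Fin T → Zw) × (Fin T → Zv) => seqQ qc qw qv z *
          logRatioLast qv pv t (fun r => z.2.2 (Fin.castLE t.isLt r))) ν ∧
        ∫ z, seqQ qc qw qv z * logRatioLast qv pv t (fun r => z.2.2 (Fin.castLE t.isLt r)) ∂ν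
          = ∫ y : Fin ((t : ℕ) + 1) → Zv, arProdLE qv t.isLt y * logRatioLast qv pv t y
              ∂(Measure.pi fun _ => μv) := by
    intro t
    obtain ⟨h1, h2⟩ := prod3_fubini hqc_int hQw_int (hmargv t).1
    have hpt : ∀ z : Zc × (Fin T → Zw) × (Fin T → Zv),
        qc z.1 * arProdLE qw (le_refl T) z.2.1 * (arProdLE qv (le_refl T) z.2.2 *
              logRatioLast qv pv t (fun r => z.2.2 (Fin.castLE t.isLt r)))
          = seqQ qc qw qv z * logRatioLast qv pv t (fun r => z.2.2 (Fin.castLE t.isLt r)) := by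
      intro z
      show _ = qc z.1 * arProdLE qw (le_refl T) z.2.1 * arProdLE qv (le_refl T) z.2.2 * _
      ring
    constructor
    · exact h1.congr (Filter.Eventually.of_forall hpt)
    · rw [← integral_congr_ae (Filter.Eventually.of_forall hpt), h2, hqc_norm, hQw_norm,
        (hmargv t).2]
      ring
  -- pointwise decomposition of the KL integrand
  have hae : ∀ᵐ z ∂ν, seqQ qc qw qv z * Real.log (seqQ qc qw qv z / seqG pc pw pv f g z)
      = seqQ qc qw qv z * Real.log (qc z.1 / pc z.1)
        + (∑ t : Fin T, seqQ qc qw qv z *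
            logRatioLast qw pw t (fun r => z.2.1 (Fin.castLE t.isLt r)))
        + (∑ t : Fin T, seqQ qc qw qv z *
            logRatioLast qv pv t (fun r => z.2.2 (Fin.castLE t.isLt r)))
        - (∑ t : Fin T, seqQ qc qw qv z * Real.log (f t z.1 (z.2.1 t)))
        - (∑ t : Fin T, seqQ qc qw qv z * Real.log (g t z.1 (z.2.2 t))) := by
    filter_upwards [h_pos] with z hz
    rcases (hQ0 z).eq_or_lt with h0 | hQp
    · simp [← h0]
    · have hGp := hz hQp
      have hQne : seqQ qc qw qv z ≠ 0 := hQp.ne'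
      have hGne : seqG pc pw pv f g z ≠ 0 := hGp.ne'
      have hQfac : (qc z.1 ≠ 0 ∧ arProdLE qw (le_refl T) z.2.1 ≠ 0) ∧
          arProdLE qv (le_refl T) z.2.2 ≠ 0 := by
        have h := hQne
        simp only [seqQ, mul_ne_zero_iff] at h
        exact h
      obtain ⟨⟨hqcne, harwne⟩, harvne⟩ := hQfac
      have hGfac : ((((pc z.1 ≠ 0 ∧ arProdLE pw (le_refl T) z.2.1 ≠ 0)) ∧
          arProdLE pv (le_refl T) z.2.2 ≠ 0) ∧ (∏ t, f t z.1 (z.2.1 t)) ≠ 0) ∧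
          (∏ t, g t z.1 (z.2.2 t)) ≠ 0 := by
        have h := hGne
        simp only [seqG, mul_ne_zero_iff] at h
        exact h
      obtain ⟨⟨⟨⟨hpcne, harwpne⟩, harvpne⟩, hPfne⟩, hPgne⟩ := hGfac
      have hqwfac : ∀ s : Fin T, qw ⟨(s : ℕ), lt_of_lt_of_le s.isLt (le_refl T)⟩
          (fun r => z.2.1 (Fin.castLE s.isLt.le r)) (z.2.1 s) ≠ 0 := by
        intro s
        have h := harwne
        unfold arProdLE at h
        exact Finset.prod_ne_zero_iff.mp h s (Finset.mem_univ s)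
      have hpwfac : ∀ s : Fin T, pw ⟨(s : ℕ), lt_of_lt_of_le s.isLt (le_refl T)⟩
          (fun r => z.2.1 (Fin.castLE s.isLt.le r)) (z.2.1 s) ≠ 0 := by
        intro s
        have h := harwpne
        unfold arProdLE at h
        exact Finset.prod_ne_zero_iff.mp h s (Finset.mem_univ s)
      have hqvfac : ∀ s : Fin T, qv ⟨(s : ℕ), lt_of_lt_of_le s.isLt (le_refl T)⟩
          (fun r => z.2.2 (Fin.castLE s.isLt.le r)) (z.2.2 s) ≠ 0 := by
        intro s
        have h := harvne
        unfold arProdLE at h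
        exact Finset.prod_ne_zero_iff.mp h s (Finset.mem_univ s)
      have hpvfac : ∀ s : Fin T, pv ⟨(s : ℕ), lt_of_lt_of_le s.isLt (le_refl T)⟩
          (fun r => z.2.2 (Fin.castLE s.isLt.le r)) (z.2.2 s) ≠ 0 := by
        intro s
        have h := harvpne
        unfold arProdLE at h
        exact Finset.prod_ne_zero_iff.mp h s (Finset.mem_univ s)
      have hffac : ∀ s : Fin T, f s z.1 (z.2.1 s) ≠ 0 := fun s =>
        Finset.prod_ne_zero_iff.mp hPfne s (Finset.mem_univ s)
      have hgfac : ∀ s : Fin T, g s z.1 (z.2.2 s) ≠ 0 := fun s =>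
        Finset.prod_ne_zero_iff.mp hPgne s (Finset.mem_univ s)
      have hlogQ : Real.log (seqQ qc qw qv z) = Real.log (qc z.1)
          + ((∑ s : Fin T, Real.log (qw ⟨(s : ℕ), lt_of_lt_of_le s.isLt (le_refl T)⟩
              (fun r => z.2.1 (Fin.castLE s.isLt.le r)) (z.2.1 s)))
          + (∑ s : Fin T, Real.log (qv ⟨(s : ℕ), lt_of_lt_of_le s.isLt (le_refl T)⟩
              (fun r => z.2.2 (Fin.castLE s.isLt.le r)) (z.2.2 s)))) := by
        show Real.log (qc z.1 * arProdLE qw (le_refl T) z.2.1 * arProdLE qv (le_refl T) z.2.2) = _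
        rw [Real.log_mul (mul_ne_zero hqcne harwne) harvne, Real.log_mul hqcne harwne]
        unfold arProdLE
        rw [Real.log_prod (fun s _ => hqwfac s), Real.log_prod (fun s _ => hqvfac s)]
        ring
      have hlogG : Real.log (seqG pc pw pv f g z) = Real.log (pc z.1)
          + ((∑ s : Fin T, Real.log (pw ⟨(s : ℕ), lt_of_lt_of_le s.isLt (le_refl T)⟩
              (fun r => z.2.1 (Fin.castLE s.isLt.le r)) (z.2.1 s)))
          + (∑ s : Fin T, Real.log (pv ⟨(s : ℕ), lt_of_lt_of_le s.isLt (le_refl T)⟩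
              (fun r => z.2.2 (Fin.castLE s.isLt.le r)) (z.2.2 s)))
          + (∑ s : Fin T, Real.log (f s z.1 (z.2.1 s)))
          + (∑ s : Fin T, Real.log (g s z.1 (z.2.2 s)))) := by
        show Real.log (pc z.1 * arProdLE pw (le_refl T) z.2.1 * arProdLE pv (le_refl T) z.2.2
            * (∏ t, f t z.1 (z.2.1 t)) * (∏ t, g t z.1 (z.2.2 t))) = _
        rw [Real.log_mul (mul_ne_zero (mul_ne_zero (mul_ne_zero hpcne harwpne) harvpne) hPfne)
            hPgne,
          Real.log_mul (mul_ne_zero (mul_ne_zero hpcne harwpne) harvpne) hPfne,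
          Real.log_mul (mul_ne_zero hpcne harwpne) harvpne,
          Real.log_mul hpcne harwpne]
        unfold arProdLE
        rw [Real.log_prod (fun s _ => hpwfac s), Real.log_prod (fun s _ => hpvfac s),
          Real.log_prod (fun s _ => hffac s), Real.log_prod (fun s _ => hgfac s)]
        ring
      have hLw : ∀ t : Fin T, logRatioLast qw pw t (fun r => z.2.1 (Fin.castLE t.isLt r))
          = Real.log (qw ⟨(t : ℕ), lt_of_lt_of_le t.isLt (le_refl T)⟩
              (fun r => z.2.1 (Fin.castLE t.isLt.le r)) (z.2.1 t))
            - Real.log (pw ⟨(t : ℕ), lt_of_lt_of_le t.isLt (le_refl T)⟩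
              (fun r => z.2.1 (Fin.castLE t.isLt.le r)) (z.2.1 t)) := fun t =>
        Real.log_div (hqwfac t) (hpwfac t)
      have hLv : ∀ t : Fin T, logRatioLast qv pv t (fun r => z.2.2 (Fin.castLE t.isLt r))
          = Real.log (qv ⟨(t : ℕ), lt_of_lt_of_le t.isLt (le_refl T)⟩
              (fun r => z.2.2 (Fin.castLE t.isLt.le r)) (z.2.2 t))
            - Real.log (pv ⟨(t : ℕ), lt_of_lt_of_le t.isLt (le_refl T)⟩
              (fun r => z.2.2 (Fin.castLE t.isLt.le r)) (z.2.2 t)) := fun t =>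
        Real.log_div (hqvfac t) (hpvfac t)
      rw [Real.log_div hQne hGne, hlogQ, hlogG, Real.log_div hqcne hpcne]
      simp only [hLw, hLv]
      rw [← Finset.mul_sum, ← Finset.mul_sum, ← Finset.mul_sum, ← Finset.mul_sum,
        Finset.sum_sub_distrib, Finset.sum_sub_distrib]
      ring
  -- integral decomposition
  have hBint : Integrable (fun z : Zc × (Fin T → Zw) × (Fin T → Zv) =>
      ∑ t : Fin T, seqQ qc qw qv z *
        logRatioLast qw pw t (fun r => z.2.1 (Fin.castLE t.isLt r))) ν :=
    integrable_finset_sum _ fun t _ => (hτw t).1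
  have hCint : Integrable (fun z : Zc × (Fin T → Zw) × (Fin T → Zv) =>
      ∑ t : Fin T, seqQ qc qw qv z *
        logRatioLast qv pv t (fun r => z.2.2 (Fin.castLE t.isLt r))) ν :=
    integrable_finset_sum _ fun t _ => (hτv t).1
  have hDint : Integrable (fun z : Zc × (Fin T → Zw) × (Fin T → Zv) =>
      ∑ t : Fin T, seqQ qc qw qv z * Real.log (f t z.1 (z.2.1 t))) ν :=
    integrable_finset_sum _ fun t _ => hf_int t
  have hEint : Integrable (fun z : Zc × (Fin T → Zw) × (Fin T → Zv) =>
      ∑ t : Fin T, seqQ qc qw qv z * Real.log (g t z.1 (z.2.2 t))) ν :=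
    integrable_finset_sum _ fun t _ => hg_int t
  have hdecomp : ∫ z, seqQ qc qw qv z * Real.log (seqQ qc qw qv z / seqG pc pw pv f g z) ∂ν
      = (∫ x, qc x * Real.log (qc x / pc x) ∂μc)
        + (∑ t : Fin T, ∫ y : Fin ((t : ℕ) + 1) → Zw,
            arProdLE qw t.isLt y * logRatioLast qw pw t y ∂(Measure.pi fun _ => μw))
        + (∑ t : Fin T, ∫ y : Fin ((t : ℕ) + 1) → Zv,
            arProdLE qv t.isLt y * logRatioLast qv pv t y ∂(Measure.pi fun _ => μv))
        - (∑ t : Fin T, ∫ z, seqQ qc qw qv z * Real.log (f t z.1 (z.2.1 t)) ∂ν)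
        - (∑ t : Fin T, ∫ z, seqQ qc qw qv z * Real.log (g t z.1 (z.2.2 t)) ∂ν) := by
    have hAB : Integrable (fun z : Zc × (Fin T → Zw) × (Fin T → Zv) =>
        seqQ qc qw qv z * Real.log (qc z.1 / pc z.1)
          + ∑ t : Fin T, seqQ qc qw qv z *
              logRatioLast qw pw t (fun r => z.2.1 (Fin.castLE t.isLt r))) ν :=
      hτc.1.add hBint
    have hABC : Integrable (fun z : Zc × (Fin T → Zw) × (Fin T → Zv) =>
        (seqQ qc qw qv z * Real.log (qc z.1 / pc z.1)
          + ∑ t : Fin T, seqQ qc qw qv z *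
              logRatioLast qw pw t (fun r => z.2.1 (Fin.castLE t.isLt r)))
          + ∑ t : Fin T, seqQ qc qw qv z *
              logRatioLast qv pv t (fun r => z.2.2 (Fin.castLE t.isLt r))) ν :=
      hAB.add hCint
    have hABCD : Integrable (fun z : Zc × (Fin T → Zw) × (Fin T → Zv) =>
        ((seqQ qc qw qv z * Real.log (qc z.1 / pc z.1)
          + ∑ t : Fin T, seqQ qc qw qv z *
              logRatioLast qw pw t (fun r => z.2.1 (Fin.castLE t.isLt r)))
          + ∑ t : Fin T, seqQ qc qw qv z *
              logRatioLast qv pv t (fun r => z.2.2 (Fin.castLE t.isLt r)))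
          - ∑ t : Fin T, seqQ qc qw qv z * Real.log (f t z.1 (z.2.1 t))) ν :=
      hABC.sub hDint
    rw [integral_congr_ae hae, integral_sub hABCD hEint, integral_sub hABC hDint,
      integral_add hAB hCint, integral_add hτc.1 hBint,
      integral_finset_sum _ (fun t _ => (hτw t).1),
      integral_finset_sum _ (fun t _ => (hτv t).1),
      integral_finset_sum _ (fun t _ => hf_int t),
      integral_finset_sum _ (fun t _ => hg_int t),
      hτc.2, Finset.sum_congr rfl (fun t _ => (hτw t).2),
      Finset.sum_congr rfl (fun t _ => (hτv t).2)]
  -- the Gibbs / Jensen step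
  have hptw : ∀ᵐ z ∂ν,
      -(seqQ qc qw qv z * Real.log (seqQ qc qw qv z / seqG pc pw pv f g z))
          - Real.log m * seqQ qc qw qv z
        ≤ seqG pc pw pv f g z / m - seqQ qc qw qv z := by
    filter_upwards [h_pos] with z hz
    rcases (hQ0 z).eq_or_lt with h0 | hQp
    · rw [← h0]
      simp only [zero_mul, mul_zero, neg_zero, sub_zero, zero_sub, neg_zero]
      have : 0 ≤ seqG pc pw pv f g z / m := div_nonneg (hG0 z) hm_pos.le
      linarith
    · have hGp := hz hQp
      have h1 : 0 < seqG pc pw pv f g z / (m * seqQ qc qw qv z) :=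
        div_pos hGp (mul_pos hm_pos hQp)
      have h2 := Real.log_le_sub_one_of_pos h1
      have h3 : seqQ qc qw qv z * Real.log (seqG pc pw pv f g z / (m * seqQ qc qw qv z))
          ≤ seqQ qc qw qv z * (seqG pc pw pv f g z / (m * seqQ qc qw qv z) - 1) :=
        mul_le_mul_of_nonneg_left h2 hQp.le
      have e1 : Real.log (seqQ qc qw qv z / seqG pc pw pv f g z)
          = Real.log (seqQ qc qw qv z) - Real.log (seqG pc pw pv f g z) :=
        Real.log_div hQp.ne' hGp.ne'
      have e2 : Real.log (seqG pc pw pv f g z / (m * seqQ qc qw qv z))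
          = Real.log (seqG pc pw pv f g z) - (Real.log m + Real.log (seqQ qc qw qv z)) := by
        rw [Real.log_div hGp.ne' (mul_ne_zero hm_pos.ne' hQp.ne'),
          Real.log_mul hm_pos.ne' hQp.ne']
      have e3 : seqQ qc qw qv z * (seqG pc pw pv f g z / (m * seqQ qc qw qv z) - 1)
          = seqG pc pw pv f g z / m - seqQ qc qw qv z := by
        field_simp
      rw [e1]
      rw [e2] at h3
      rw [e3] at h3
      linarith
  have hLint : Integrable (fun z =>
      -(seqQ qc qw qv z * Real.log (seqQ qc qw qv z / seqG pc pw pv f g z))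
        - Real.log m * seqQ qc qw qv z) ν :=
    hQG_int.neg.sub (hQ_int.const_mul _)
  have hRint : Integrable (fun z => seqG pc pw pv f g z / m - seqQ qc qw qv z) ν :=
    (hG_int.div_const m).sub hQ_int
  have hn1 : Integrable (fun z =>
      -(seqQ qc qw qv z * Real.log (seqQ qc qw qv z / seqG pc pw pv f g z))) ν := hQG_int.neg
  have hn2 : Integrable (fun z => Real.log m * seqQ qc qw qv z) ν := hQ_int.const_mul _
  have hn3 : Integrable (fun z => seqG pc pw pv f g z / m) ν := hG_int.div_const m
  have hmono := integral_mono_ae hLint hRint hptw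
  rw [integral_sub hn1 hn2, integral_sub hn3 hQ_int,
    integral_neg, integral_const_mul, integral_div, hQ_one, ← hm, div_self hm_pos.ne'] at hmono
  -- reconstruction terms
  have hrecon : (∑ t : Fin T, ∫ z, seqQ qc qw qv z *
        (Real.log (f t z.1 (z.2.1 t)) + Real.log (g t z.1 (z.2.2 t))) ∂ν)
      = (∑ t : Fin T, ∫ z, seqQ qc qw qv z * Real.log (f t z.1 (z.2.1 t)) ∂ν)
        + (∑ t : Fin T, ∫ z, seqQ qc qw qv z * Real.log (g t z.1 (z.2.2 t)) ∂ν) := by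
    rw [← Finset.sum_add_distrib]
    refine Finset.sum_congr rfl fun t _ => ?_
    rw [← integral_add (hf_int t) (hg_int t)]
    congr 1
    funext z
    ring
  simp only [logRatioLast] at hdecomp
  rw [ge_iff_le, hrecon]
  linarith [hmono, hdecomp]
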